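/- For all m ≥ 1 and n ≥ 1, A^{2m−1}(B(n)) − 1 = B^m(A(n)), where A(n) = ⌊nφ⌋, B(n) = ⌊nφ²⌋, and A^k, B^k denote k-fold iterates. -/

import Mathlib

noncomputable def phi : ℝ := (1 + Real.sqrt 5) / 2

/-- Lower Wythoff sequence. -/
noncomputable def A (n : ℕ) : ℕ := (⌊(n : ℝ) * phi⌋).toNat

/-- Upper Wythoff sequence. -/
noncomputable def B (n : ℕ) : ℕ := (⌊(n : ℝ) * phi ^ 2⌋).toNat

/-- `d` is the digit sequence of the Zeckendorf expansion of `N`: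
digits are 0/1, no two consecutive 1's, finitely many nonzero digits,
and `N = Σ dᵢ · F_{i+2}`. -/
def IsZeck (N : ℕ) (d : ℕ → ℕ) : Prop :=
  (∀ i, d i ≤ 1) ∧ (∀ i, ¬(d i = 1 ∧ d (i + 1) = 1)) ∧
  (Function.support d).Finite ∧ N = ∑ᶠ i, d i * Nat.fib (i + 2)

lemma phi_eq : phi = Real.goldenRatio := rfl

lemma one_lt_phi : 1 < phi := Real.one_lt_goldenRatio

lemma phi_lt_two : phi < 2 := Real.goldenRatio_lt_two

lemma phi_mul_self : phi * phi = phi + 1 := by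
  have h := Real.goldenRatio_sq
  rw [← phi_eq, sq] at h; exact h

lemma irrational_phi : Irrational phi := Real.goldenRatio_irrational

lemma fract_pos (k : ℕ) (hk : 1 ≤ k) : 0 < Int.fract ((k : ℝ) * phi) := by
  rcases lt_or_eq_of_le (Int.fract_nonneg ((k : ℝ) * phi)) with h | h
  · exact h
  · exfalso
    have hirr : Irrational ((k : ℝ) * phi) := irrational_phi.natCast_mul (by omega)
    have hx : (k : ℝ) * phi = (⌊(k : ℝ) * phi⌋ : ℝ) := by
      have h2 := Int.self_sub_fract ((k : ℝ) * phi)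
      rw [← h] at h2; linarith
    exact hirr ⟨(⌊(k : ℝ) * phi⌋ : ℚ), by push_cast; exact hx.symm⟩

lemma floorA_nonneg (k : ℕ) : 0 ≤ ⌊(k : ℝ) * phi⌋ := by
  apply Int.floor_nonneg.mpr
  have := one_lt_phi
  positivity

lemma A_cast (k : ℕ) : (A k : ℤ) = ⌊(k : ℝ) * phi⌋ := Int.toNat_of_nonneg (floorA_nonneg k)

lemma B_cast (k : ℕ) : (B k : ℤ) = ⌊(k : ℝ) * phi ^ 2⌋ := by
  apply Int.toNat_of_nonneg
  apply Int.floor_nonneg.mpr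
  have := one_lt_phi
  positivity

lemma A_castR (k : ℕ) : (A k : ℝ) = (k : ℝ) * phi - Int.fract ((k : ℝ) * phi) := by
  rw [Int.self_sub_fract]
  exact_mod_cast congrArg (Int.cast : ℤ → ℝ) (A_cast k)

lemma fract_B (k : ℕ) : Int.fract ((k : ℝ) * phi ^ 2) = Int.fract ((k : ℝ) * phi) := by
  have h : (k : ℝ) * phi ^ 2 = (k : ℝ) * phi + (k : ℕ) := by
    nlinarith [phi_mul_self]
  rw [h, Int.fract_add_natCast]

lemma B_castR (k : ℕ) : (B k : ℝ) = (k : ℝ) * phi ^ 2 - Int.fract ((k : ℝ) * phi) := by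
  rw [← fract_B, Int.self_sub_fract]
  exact_mod_cast congrArg (Int.cast : ℤ → ℝ) (B_cast k)

lemma A_ge (k : ℕ) : k ≤ A k := by
  have h : (k : ℤ) ≤ ⌊(k : ℝ) * phi⌋ := by
    apply Int.le_floor.mpr
    push_cast
    nlinarith [one_lt_phi, Nat.cast_nonneg (α := ℝ) k]
  rw [← A_cast k] at h
  exact_mod_cast h

lemma B_eq (k : ℕ) : B k = k + A k := by
  have h : ⌊(k : ℝ) * phi ^ 2⌋ = ⌊(k : ℝ) * phi⌋ + (k : ℕ) := by
    have hx : (k : ℝ) * phi ^ 2 = (k : ℝ) * phi + (k : ℕ) := by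
      nlinarith [phi_mul_self]
    rw [hx, Int.floor_add_natCast]
  have h2 := B_cast k
  rw [h, ← A_cast k] at h2
  omega

lemma L_AA (k : ℕ) (hk : 1 ≤ k) : A (A k) + 1 = A k + k := by
  set f := Int.fract ((k : ℝ) * phi) with hf
  have hf0 : 0 < f := fract_pos k hk
  have hf1 : f < 1 := Int.fract_lt_one _
  have hφ := one_lt_phi
  have hφ2 := phi_lt_two
  have hm := phi_mul_self
  have hfl : ⌊(A k : ℝ) * phi⌋ = ⌊(k : ℝ) * phi⌋ + (k : ℤ) - 1 := by
    apply Int.floor_eq_iff.mpr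
    have hA := A_castR k
    have hsf : ((⌊(k : ℝ) * phi⌋ : ℤ) : ℝ) = (k : ℝ) * phi - f := (Int.self_sub_fract _).symm
    constructor
    · push_cast [hsf]
      nlinarith
    · push_cast [hsf]
      nlinarith
  have h2 : (A (A k) : ℤ) = ⌊(k : ℝ) * phi⌋ + (k : ℤ) - 1 := by
    rw [A_cast (A k), hfl]
  rw [← A_cast k] at h2
  omega

lemma L_AB (k : ℕ) (hk : 1 ≤ k) : A (B k) = A k + B k := by
  set f := Int.fract ((k : ℝ) * phi) with hf
  have hf0 : 0 < f := fract_pos k hk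
  have hf1 : f < 1 := Int.fract_lt_one _
  have hφ := one_lt_phi
  have hφ2 := phi_lt_two
  have hm := phi_mul_self
  have hfl : ⌊(B k : ℝ) * phi⌋ = ⌊(k : ℝ) * phi⌋ + ⌊(k : ℝ) * phi ^ 2⌋ := by
    apply Int.floor_eq_iff.mpr
    have hB := B_castR k
    have hsf : ((⌊(k : ℝ) * phi⌋ : ℤ) : ℝ) = (k : ℝ) * phi - f := (Int.self_sub_fract _).symm
    have hsf2 : ((⌊(k : ℝ) * phi ^ 2⌋ : ℤ) : ℝ) = (k : ℝ) * phi ^ 2 - f := by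
      rw [← fract_B k] at hf
      rw [hf]; exact (Int.self_sub_fract _).symm
    constructor
    · push_cast [hsf, hsf2]
      nlinarith
    · push_cast [hsf, hsf2]
      nlinarith
  have h2 : (A (B k) : ℤ) = ⌊(k : ℝ) * phi⌋ + ⌊(k : ℝ) * phi ^ 2⌋ := by
    rw [A_cast (B k), hfl]
  rw [← A_cast k, ← B_cast k] at h2
  exact_mod_cast h2

lemma L_AB1 (k : ℕ) (hk : 1 ≤ k) : A (B k + 1) = A k + B k + 1 := by
  set f := Int.fract ((k : ℝ) * phi) with hf
  have hf0 : 0 < f := fract_pos k hk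
  have hf1 : f < 1 := Int.fract_lt_one _
  have hφ := one_lt_phi
  have hφ2 := phi_lt_two
  have hm := phi_mul_self
  have hfl : ⌊((B k + 1 : ℕ) : ℝ) * phi⌋ = ⌊(k : ℝ) * phi⌋ + ⌊(k : ℝ) * phi ^ 2⌋ + 1 := by
    apply Int.floor_eq_iff.mpr
    have hB := B_castR k
    have hsf : ((⌊(k : ℝ) * phi⌋ : ℤ) : ℝ) = (k : ℝ) * phi - f := (Int.self_sub_fract _).symm
    have hsf2 : ((⌊(k : ℝ) * phi ^ 2⌋ : ℤ) : ℝ) = (k : ℝ) * phi ^ 2 - f := by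
      rw [← fract_B k] at hf
      rw [hf]; exact (Int.self_sub_fract _).symm
    constructor
    · push_cast [hsf, hsf2, hB]
      nlinarith
    · push_cast [hsf, hsf2, hB]
      nlinarith
  have h2 : (A (B k + 1) : ℤ) = ⌊(k : ℝ) * phi⌋ + ⌊(k : ℝ) * phi ^ 2⌋ + 1 := by
    rw [A_cast (B k + 1), hfl]
  rw [← A_cast k, ← B_cast k] at h2
  exact_mod_cast h2

lemma step_lemma (j : ℕ) (hj : 1 ≤ j) : A (A (B j + 1)) = B (B j) + 1 := by
  have h1 := L_AB1 j hj
  have h2 := L_AA (B j + 1) (by omega)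
  have h3 := B_eq (B j)
  have h4 := L_AB j hj
  have h5 := B_eq j
  omega

lemma B_iter_pos (k : ℕ) (hk : 1 ≤ k) (s : ℕ) : 1 ≤ B^[s] k := by
  induction s with
  | zero => simpa using hk
  | succ s ih =>
    rw [Function.iterate_succ_apply']
    have := B_eq (B^[s] k)
    omega

lemma key (n : ℕ) (hn : 1 ≤ n) : ∀ s : ℕ, A^[2 * (s + 1) - 1] (B n) = B^[s + 1] (A n) + 1 := by
  intro s
  induction s with
  | zero =>
    have hAn : 1 ≤ A n := le_trans hn (A_ge n)
    have h1 := L_AB n hn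
    have h2 := B_eq n
    have h3 := B_eq (A n)
    have h4 := L_AA n hn
    show A^[1] (B n) = B^[1] (A n) + 1
    simp only [Function.iterate_one]
    omega
  | succ s ih =>
    have hAn : 1 ≤ A n := le_trans hn (A_ge n)
    set j := B^[s] (A n) with hj
    have hj1 : 1 ≤ j := B_iter_pos (A n) hAn s
    have hidx : 2 * (s + 1 + 1) - 1 = (2 * (s + 1) - 1) + 1 + 1 := by omega
    rw [hidx, Function.iterate_succ_apply', Function.iterate_succ_apply', ih]
    have hB1 : B^[s + 1] (A n) = B j := by
      rw [Function.iterate_succ_apply', hj]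
    have hB2 : B^[s + 1 + 1] (A n) = B (B j) := by
      rw [Function.iterate_succ_apply', hB1]
    rw [hB1, hB2]
    exact step_lemma j hj1

/-- A^{2m−1}(B(n)) − 1 = B^m(A(n)) for m, n ≥ 1. -/
theorem iterate_A_B_sub_one (m n : ℕ) (hm : 1 ≤ m) (hn : 1 ≤ n) :
    A^[2 * m - 1] (B n) - 1 = B^[m] (A n) := by
  obtain ⟨s, rfl⟩ : ∃ s, m = s + 1 := ⟨m - 1, by omega⟩
  have := key n hn s
  omega
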